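/- arXiv:2002.11311 — 6 statements merged into one kernel-verified Lean document; each statement's English description precedes it below -/
import Mathlib

section
/- Let n, m be natural numbers, let ν : Fin (2m+1) → ℝⁿ index vectors ν_{-m},…,ν_m with ν_{-ℓ} = -ν_ℓ, let R_{-m},…,R_m be nonnegative real numbers, let A ∈ ℝⁿ, let D be a symmetric positive semidefinite n×n real matrix, and let p ∈ ℝⁿ. If A·p + pᵀDp + Σ_{ℓ=-m}^{m} R_ℓ (exp(ν_ℓ·p) − 1) = 0, then (A + Σ_{ℓ=-m}^{m} ν_ℓ R_ℓ)·p ≤ 0. -/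
open Matrix Finset

theorem stmt_0 (n m : ℕ) (ν : ℤ → Fin n → ℝ)
    (hν : ∀ ℓ ∈ Finset.Icc (-(m : ℤ)) (m : ℤ), ν (-ℓ) = -ν ℓ)
    (R : ℤ → ℝ) (hR : ∀ ℓ ∈ Finset.Icc (-(m : ℤ)) (m : ℤ), 0 ≤ R ℓ)
    (A : Fin n → ℝ) (D : Matrix (Fin n) (Fin n) ℝ)
    (hDsymm : D.IsSymm) (hDpos : D.PosSemidef)
    (p : Fin n → ℝ)
    (h : A ⬝ᵥ p + p ⬝ᵥ D.mulVec p
        + ∑ ℓ ∈ Finset.Icc (-(m : ℤ)) (m : ℤ), R ℓ * (Real.exp (ν ℓ ⬝ᵥ p) - 1) = 0) :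
    (A + ∑ ℓ ∈ Finset.Icc (-(m : ℤ)) (m : ℤ), R ℓ • ν ℓ) ⬝ᵥ p ≤ 0 := by
  have hD : 0 ≤ p ⬝ᵥ D.mulVec p := by simpa using hDpos.dotProduct_mulVec_nonneg p
  have key : ∀ ℓ ∈ Finset.Icc (-(m : ℤ)) (m : ℤ),
      R ℓ * (ν ℓ ⬝ᵥ p) ≤ R ℓ * (Real.exp (ν ℓ ⬝ᵥ p) - 1) := by
    intro ℓ hℓ
    exact mul_le_mul_of_nonneg_left
      (by linarith [Real.add_one_le_exp (ν ℓ ⬝ᵥ p)]) (hR ℓ hℓ)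
  have hsum := Finset.sum_le_sum key
  rw [add_dotProduct,
    show (∑ ℓ ∈ Finset.Icc (-(m : ℤ)) (m : ℤ), R ℓ • ν ℓ) ⬝ᵥ p
        = ∑ ℓ ∈ Finset.Icc (-(m : ℤ)) (m : ℤ), R ℓ * (ν ℓ ⬝ᵥ p) from by
      simp only [dotProduct, Finset.sum_apply, Pi.smul_apply, smul_eq_mul,
        Finset.sum_mul, Finset.mul_sum]
      rw [Finset.sum_comm]
      simp [mul_assoc]]
  linarith
end

section
/- Let n, m be natural numbers, ν_{-m},…,ν_m ∈ ℝⁿ with ν_{-ℓ} = -ν_ℓ, and let A : ℝⁿ → ℝⁿ, R_ℓ : ℝⁿ → [0,∞) for each ℓ, and D : ℝⁿ → (symmetric positive semidefinite n×n matrices) be given. Let F(x) = A(x) + Σ_{ℓ=-m}^{m} ν_ℓ R_ℓ(x). Suppose φ : ℝⁿ → ℝ is differentiable and satisfies the stationary Hamilton–Jacobi equation A(x)·∇φ(x) + ∇φ(x)ᵀD(x)∇φ(x) + Σ_{ℓ=-m}^{m} R_ℓ(x)(exp(ν_ℓ·∇φ(x)) − 1) = 0 for all x ∈ ℝⁿ.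 If y : ℝ → ℝⁿ is differentiable and satisfies y'(t) = F(y(t)) for all t, then the function t ↦ φ(y(t)) has nonpositive derivative at every t; in particular it is monotone nonincreasing. -/
open Matrix Finset
open scoped RealInnerProductSpace

theorem stmt_1 (n m : ℕ) (ν : ℤ → EuclideanSpace ℝ (Fin n))
    (hν : ∀ ℓ ∈ Finset.Icc (-(m : ℤ)) (m : ℤ), ν (-ℓ) = -ν ℓ)
    (A : EuclideanSpace ℝ (Fin n) → EuclideanSpace ℝ (Fin n))
    (R : ℤ → EuclideanSpace ℝ (Fin n) → ℝ)
    (hR : ∀ ℓ ∈ Finset.Icc (-(m : ℤ)) (m : ℤ), ∀ x, 0 ≤ R ℓ x)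
    (D : EuclideanSpace ℝ (Fin n) → Matrix (Fin n) (Fin n) ℝ)
    (hDsymm : ∀ x, (D x).IsSymm) (hDpos : ∀ x, (D x).PosSemidef)
    (F : EuclideanSpace ℝ (Fin n) → EuclideanSpace ℝ (Fin n))
    (hF : ∀ x, F x = A x + ∑ ℓ ∈ Finset.Icc (-(m : ℤ)) (m : ℤ), R ℓ x • ν ℓ)
    (φ : EuclideanSpace ℝ (Fin n) → ℝ)
    (hφ : Differentiable ℝ φ)
    (hHJ : ∀ x, ⟪A x, gradient φ x⟫
        + ⟪gradient φ x, Matrix.toEuclideanLin (D x) (gradient φ x)⟫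
        + ∑ ℓ ∈ Finset.Icc (-(m : ℤ)) (m : ℤ),
            R ℓ x * (Real.exp ⟪ν ℓ, gradient φ x⟫ - 1) = 0)
    (y : ℝ → EuclideanSpace ℝ (Fin n))
    (hy : ∀ t, HasDerivAt y (F (y t)) t) :
    (∀ t, deriv (fun s => φ (y s)) t ≤ 0) ∧ Antitone (fun t => φ (y t)) := by
  have hderiv : ∀ t, HasDerivAt (fun s => φ (y s)) ⟪gradient φ (y t), F (y t)⟫ t := by
    intro t
    have h1 : HasFDerivAt φ (InnerProductSpace.toDual ℝ _ (gradient φ (y t))) (y t) :=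
      ((hφ (y t)).hasGradientAt).hasFDerivAt
    have := h1.comp_hasDerivAt t (hy t)
    simpa [InnerProductSpace.toDual_apply_apply, Function.comp_def] using this
  have key : ∀ t, ⟪gradient φ (y t), F (y t)⟫ ≤ 0 := by
    intro t
    set x := y t
    set g := gradient φ x with hg
    have hquad : 0 ≤ ⟪g, Matrix.toEuclideanLin (D x) g⟫ := by
      have := (hDpos x).dotProduct_mulVec_nonneg (WithLp.ofLp g)
      rw [Matrix.toEuclideanLin_apply]
      simpa [PiLp.inner_apply, dotProduct, mul_comm] using this
    have hexp : ∀ ℓ ∈ Finset.Icc (-(m : ℤ)) (m : ℤ),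
        R ℓ x * ⟪g, ν ℓ⟫ ≤ R ℓ x * (Real.exp ⟪ν ℓ, g⟫ - 1) := by
      intro ℓ hℓ
      refine mul_le_mul_of_nonneg_left ?_ (hR ℓ hℓ x)
      rw [real_inner_comm]
      linarith [Real.add_one_le_exp ⟪ν ℓ, g⟫]
    have hinner : ⟪g, F x⟫ = ⟪g, A x⟫
        + ∑ ℓ ∈ Finset.Icc (-(m : ℤ)) (m : ℤ), R ℓ x * ⟪g, ν ℓ⟫ := by
      rw [hF x, inner_add_right, inner_sum]
      exact congrArg _ (Finset.sum_congr rfl fun ℓ _ => real_inner_smul_right g (ν ℓ) (R ℓ x))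
    have hA : ⟪g, A x⟫ = -⟪g, Matrix.toEuclideanLin (D x) g⟫
        - ∑ ℓ ∈ Finset.Icc (-(m : ℤ)) (m : ℤ), R ℓ x * (Real.exp ⟪ν ℓ, g⟫ - 1) := by
      have h0 := hHJ x
      rw [← hg] at h0
      have hc := real_inner_comm (A x) g
      linarith
    rw [hinner, hA]
    have hsum := Finset.sum_le_sum hexp
    linarith
  refine ⟨fun t => ?_, ?_⟩
  · rw [(hderiv t).deriv]; exact key t
  · exact antitone_of_deriv_nonpos (fun t => (hderiv t).differentiableAt)
      (fun t => by rw [(hderiv t).deriv]; exact key t)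
end

section
/- Let S be a finite set, let q : S × S → ℝ be nonnegative, and let p : S → (ℝ → (0,∞)) be a family of differentiable positive functions satisfying the master equation d p_i(t)/dt = Σ_{j∈S} (p_j(t) q(j,i) − p_i(t) q(i,j)) for all i ∈ S and t ∈ ℝ. Then for each i and t, the local entropy s_i(t) = −p_i(t) ln p_i(t) satisfies d s_i(t)/dt = (1/2) Σ_{j∈S} (p_i q(i,j) − p_j q(j,i)) ln(p_i/p_j) + (1/2) Σ_{j∈S} (p_i q(i,j) − p_j q(j,i)) (ln(p_i p_j) + 2), where all p's are evaluated at t. -/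
open Finset

theorem stmt_6 (S : Type*) [Fintype S] (q : S → S → ℝ) (hq : ∀ i j, 0 ≤ q i j)
    (p : S → ℝ → ℝ) (hp : ∀ i t, 0 < p i t)
    (hmaster : ∀ i t, HasDerivAt (p i) (∑ j, (p j t * q j i - p i t * q i j)) t)
    (i : S) (t : ℝ) :
    HasDerivAt (fun τ => -(p i τ * Real.log (p i τ)))
      ((1 / 2) * ∑ j, (p i t * q i j - p j t * q j i) * Real.log (p i t / p j t)
        + (1 / 2) * ∑ j, (p i t * q i j - p j t * q j i) * (Real.log (p i t * p j t) + 2))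
      t := by
  set D := ∑ j, (p j t * q j i - p i t * q i j) with hD
  have hlog : HasDerivAt (fun τ => Real.log (p i τ)) (D * (p i t)⁻¹) t := by
    have h := (Real.hasDerivAt_log (ne_of_gt (hp i t))).comp t (hmaster i t)
    rw [mul_comm] at h
    exact h
  have h1 : HasDerivAt (fun τ => -(p i τ * Real.log (p i τ)))
      (-(D * Real.log (p i t) + p i t * (D * (p i t)⁻¹))) t :=
    ((hmaster i t).mul hlog).neg
  convert h1 using 1
  have hpiv : p i t * (D * (p i t)⁻¹) = D := by
    rw [← mul_assoc, mul_comm (p i t) D, mul_assoc,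
      mul_inv_cancel₀ (ne_of_gt (hp i t)), mul_one]
  rw [hpiv]
  have hrhs : -(D * Real.log (p i t) + D)
      = (∑ j, (p i t * q i j - p j t * q j i)) * (Real.log (p i t) + 1) := by
    rw [hD, Finset.sum_mul, ← Finset.sum_add_distrib, ← Finset.sum_neg_distrib, Finset.sum_mul]
    exact Finset.sum_congr rfl fun j _ => by ring
  rw [hrhs, Finset.sum_mul, Finset.mul_sum, Finset.mul_sum, ← Finset.sum_add_distrib]
  apply Finset.sum_congr rfl
  intro j _
  rw [Real.log_div (ne_of_gt (hp i t)) (ne_of_gt (hp j t)),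
      Real.log_mul (ne_of_gt (hp i t)) (ne_of_gt (hp j t))]
  ring
end

section
/- Let q_ij and q_ji be strictly positive real numbers. Then the following are equivalent: (a) for all p_i, p_j > 0 with p_i q_ij ≠ p_j q_ji, the quotient (ln p_i − ln p_j)/(p_i q_ij − p_j q_ji) is strictly positive; (b) q_ij = q_ji. -/
theorem stmt_7 (qij qji : ℝ) (hqij : 0 < qij) (hqji : 0 < qji) :
    (∀ pi pj : ℝ, 0 < pi → 0 < pj → pi * qij ≠ pj * qji →
      0 < (Real.log pi - Real.log pj) / (pi * qij - pj * qji)) ↔ qij = qji := by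
  constructor
  · intro h
    by_contra hne
    have := h 1 1 one_pos one_pos (by simpa using hne)
    simp at this
  · intro heq pi pj hpi hpj hne
    subst heq
    have hd : pi * qij - pj * qij = (pi - pj) * qij := by ring
    rcases lt_trichotomy pi pj with hlt | heq2 | hgt
    · apply div_pos_of_neg_of_neg
      · simpa using Real.log_lt_log hpi hlt
      · rw [hd]; exact mul_neg_of_neg_of_pos (by linarith) hqij
    · exact absurd (by rw [heq2]) hne
    · apply div_pos
      · simpa using Real.log_lt_log hpj hgt
      · rw [hd]; exact mul_pos (by linarith) hqij
end

section
/- Let q_ij, q_ji, π_i, π_j be strictly positive real numbers. Then the following are equivalent: (a) for all p_i, p_j > 0 with p_i q_ij ≠ p_j q_ji, the quotient (ln(p_i/π_i) − ln(p_j/π_j))/(p_i q_ij − p_j q_ji) is strictly positive; (b) π_i q_ij = π_j q_ji. -/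
theorem stmt_8 (qij qji πi πj : ℝ) (hqij : 0 < qij) (hqji : 0 < qji)
    (hπi : 0 < πi) (hπj : 0 < πj) :
    (∀ pi pj : ℝ, 0 < pi → 0 < pj → pi * qij ≠ pj * qji →
      0 < (Real.log (pi / πi) - Real.log (pj / πj)) / (pi * qij - pj * qji)) ↔
    πi * qij = πj * qji := by
  constructor
  · intro h
    by_contra hne
    have := h πi πj hπi hπj hne
    simp [div_self hπi.ne', div_self hπj.ne', Real.log_one] at this
  · intro hdb pi pj hpi hpj hne
    -- key: pi*qij - pj*qji and log(pi/πi) - log(pj/πj) have the same sign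
    have hlt : ∀ x y : ℝ, 0 < x → 0 < y → x * qij < y * qji →
        Real.log (x / πi) < Real.log (y / πj) := by
      intro x y hx hy hxy
      apply Real.log_lt_log (by positivity)
      rw [div_lt_div_iff₀ hπi hπj]
      -- x * πj < y * πi; from x*qij < y*qji and πi*qij = πj*qji
      have h1 : x * qij * πj < y * qji * πj := by
        have := mul_lt_mul_of_pos_right hxy hπj
        linarith
      have h2 : y * qji * πj = y * qij * πi := by
        have : qji * πj = qij * πi := by nlinarith [hdb]
        nlinarith [this]
      nlinarith [h1, h2, hqij]
    rcases lt_trichotomy (pi * qij) (pj * qji) with hlt' | heq | hgt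
    · have hnum := hlt pi pj hpi hpj hlt'
      exact div_pos_of_neg_of_neg (by linarith) (by linarith)
    · exact absurd heq hne
    · have hlt2 : Real.log (pj / πj) < Real.log (pi / πi) := by
        apply Real.log_lt_log (by positivity)
        rw [div_lt_div_iff₀ hπj hπi]
        nlinarith [hgt, hdb, mul_lt_mul_of_pos_right hgt hπi]
      exact div_pos (by linarith) (by linarith)
end

section
/- Let n, m be natural numbers. For each reaction ℓ ∈ {1,…,m}, let α_ℓ, β_ℓ : Fin n → ℕ be the reactant and product complexes and k_ℓ > 0 the rate constant, and for z : Fin n → (0,∞) define the mass-action rate R_ℓ(z) = k_ℓ · Π_{i} z_i^{α_ℓ(i)}. Let z^ss : Fin n → (0,∞) be complex balanced, i.e. for every function η : Fin n → ℕ one has Σ_{ℓ : β_ℓ = η} k_ℓ Π_i (z^ss_i)^{α_ℓ(i)} = Σ_{ℓ : α_ℓ = η} k_ℓ Π_i (z^ss_i)^{α_ℓ(i)}. Then for every z : Fin n → (0,∞), Σ_{ℓ=1}^{m} R_ℓ(z) · ( exp( Σ_i (β_ℓ(i) − α_ℓ(i)) · ln(z_i / z^ss_i) ) − 1 ) = 0.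 -/
open Finset

theorem stmt_17 (n m : ℕ) (α β : Fin m → Fin n → ℕ) (k : Fin m → ℝ)
    (hk : ∀ ℓ, 0 < k ℓ) (zss : Fin n → ℝ) (hzss : ∀ i, 0 < zss i)
    (hcb : ∀ η : Fin n → ℕ,
      ∑ ℓ ∈ Finset.univ.filter (fun ℓ => β ℓ = η), k ℓ * ∏ i, zss i ^ α ℓ i =
      ∑ ℓ ∈ Finset.univ.filter (fun ℓ => α ℓ = η), k ℓ * ∏ i, zss i ^ α ℓ i)
    (z : Fin n → ℝ) (hz : ∀ i, 0 < z i) :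
    ∑ ℓ, (k ℓ * ∏ i, z i ^ α ℓ i) *
      (Real.exp (∑ i, ((β ℓ i : ℝ) - (α ℓ i : ℝ)) * Real.log (z i / zss i)) - 1) = 0 := by
  classical
  set w : Fin n → ℝ := fun i => z i / zss i with hw
  have hwpos : ∀ i, 0 < w i := fun i => div_pos (hz i) (hzss i)
  set W : (Fin n → ℕ) → ℝ := fun η => ∏ i, w i ^ η i with hWdef
  have hWpos : ∀ η, 0 < W η := fun η => Finset.prod_pos (fun i _ => pow_pos (hwpos i) _)
  set c : Fin m → ℝ := fun ℓ => k ℓ * ∏ i, zss i ^ α ℓ i with hc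
  have key : ∀ ℓ, (k ℓ * ∏ i, z i ^ α ℓ i) *
      (Real.exp (∑ i, ((β ℓ i : ℝ) - (α ℓ i : ℝ)) * Real.log (z i / zss i)) - 1)
      = c ℓ * W (β ℓ) - c ℓ * W (α ℓ) := by
    intro ℓ
    have hexp : Real.exp (∑ i, ((β ℓ i : ℝ) - (α ℓ i : ℝ)) * Real.log (z i / zss i))
        = W (β ℓ) / W (α ℓ) := by
      rw [Real.exp_sum, hWdef, ← Finset.prod_div_distrib]
      refine Finset.prod_congr rfl fun i _ => ?_
      have hwi := hwpos i
      rw [sub_mul, Real.exp_sub, ← Real.log_pow, ← Real.log_pow,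
        Real.exp_log (pow_pos hwi _), Real.exp_log (pow_pos hwi _)]
    have hzα : (∏ i, z i ^ α ℓ i) = (∏ i, zss i ^ α ℓ i) * W (α ℓ) := by
      rw [hWdef, ← Finset.prod_mul_distrib]
      refine Finset.prod_congr rfl fun i _ => ?_
      rw [← mul_pow]
      congr 1
      show z i = zss i * (z i / zss i)
      rw [mul_comm]
      exact (div_mul_cancel₀ (z i) (hzss i).ne').symm
    rw [hexp, hzα]
    have hWα := (hWpos (α ℓ)).ne'
    rw [div_sub_one hWα, ← mul_div_assoc, div_eq_iff hWα, hc]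
    ring
  rw [Finset.sum_congr rfl (fun ℓ _ => key ℓ), Finset.sum_sub_distrib]
  set S : Finset (Fin n → ℕ) := (Finset.univ.image β) ∪ (Finset.univ.image α) with hS
  have h1 : ∑ ℓ, c ℓ * W (β ℓ)
      = ∑ η ∈ S, (∑ ℓ ∈ Finset.univ.filter (fun ℓ => β ℓ = η), c ℓ) * W η := by
    rw [← Finset.sum_fiberwise_of_maps_to
      (fun ℓ _ => Finset.mem_union_left _ (Finset.mem_image_of_mem β (Finset.mem_univ ℓ)))]
    refine Finset.sum_congr rfl fun η _ => ?_
    rw [Finset.sum_mul]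
    exact Finset.sum_congr rfl fun ℓ hℓ => by rw [(Finset.mem_filter.mp hℓ).2]
  have h2 : ∑ ℓ, c ℓ * W (α ℓ)
      = ∑ η ∈ S, (∑ ℓ ∈ Finset.univ.filter (fun ℓ => α ℓ = η), c ℓ) * W η := by
    rw [← Finset.sum_fiberwise_of_maps_to
      (fun ℓ _ => Finset.mem_union_right _ (Finset.mem_image_of_mem α (Finset.mem_univ ℓ)))]
    refine Finset.sum_congr rfl fun η _ => ?_
    rw [Finset.sum_mul]
    exact Finset.sum_congr rfl fun ℓ hℓ => by rw [(Finset.mem_filter.mp hℓ).2]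
  rw [h1, h2, ← Finset.sum_sub_distrib]
  refine Finset.sum_eq_zero fun η _ => ?_
  rw [← sub_mul, hcb η, sub_self, zero_mul]
end
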